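/- Let α be a finite nonempty type and let G be a closed, block-preserving subgroup of Perm(α × ℕ) such that the induced homomorphism G → Perm ℕ, g ↦ ḡ, is surjective. Then there exists a family of bijections e : ℕ → (α ≃ α) such that for every permutation π of ℕ, the permutation of α × ℕ sending (a, i) to (e (π i) ((e i)⁻¹ a), π i) belongs to G. (Equivalently, after re-enumerating the elements within each block, G contains the subgroup Id_α ≀ Sym(ℕ) of all permutations of the form (a, i) ↦ (a, π i).) -/

import Mathlib

open Equiv
set_option linter.unusedSectionVars false
namespace ClosedLadder

lemma exists_uflim {β : Type*} [Finite β] (u : Ultrafilter ℕ) (x : ℕ → β) :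
    ∃ b, {n | x n = b} ∈ u := by
  by_contra h
  push_neg at h
  have hc : ∀ b : β, {n | x n = b}ᶜ ∈ u := fun b =>
    (Ultrafilter.compl_mem_iff_notMem).2 (h b)
  have hI : (⋂ b : β, {n | x n = b}ᶜ) ∈ u := Filter.iInter_mem.2 hc
  obtain ⟨n, hn⟩ := Ultrafilter.nonempty_of_mem hI
  have := Set.mem_iInter.1 hn (x n)
  exact this rfl

noncomputable def uflim {β : Type*} [Finite β] (u : Ultrafilter ℕ) (x : ℕ → β) : β :=
  (exists_uflim u x).choose

lemma uflim_spec {β : Type*} [Finite β] (u : Ultrafilter ℕ) (x : ℕ → β) :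
    {n | x n = uflim u x} ∈ u :=
  (exists_uflim u x).choose_spec

noncomputable def UF : Ultrafilter ℕ := Ultrafilter.of Filter.cofinite

lemma cofinite_mem_UF {s : Set ℕ} (hs : s ∈ (Filter.cofinite : Filter ℕ)) : s ∈ UF :=
  Ultrafilter.of_le Filter.cofinite hs

lemma tail_mem_UF (N : ℕ) : {n | N ≤ n} ∈ UF := by
  apply cofinite_mem_UF
  rw [Filter.mem_cofinite]
  have : {n : ℕ | N ≤ n}ᶜ = {n | n < N} := by ext n; simp [Nat.not_le]
  rw [this]
  exact Set.finite_lt_nat N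


variable {α : Type*} [Finite α] [Nonempty α]

def IsLift (g : Perm (α × ℕ)) (π : Perm ℕ) : Prop := ∀ a i, (g (a, i)).2 = π i

def PureOn (g : Perm (α × ℕ)) (J : Finset ℕ) : Prop := ∀ j ∈ J, ∀ a, g (a, j) = (a, j)

lemma IsLift.snd {g : Perm (α × ℕ)} {π : Perm ℕ} (hg : IsLift g π) (x : α × ℕ) :
    (g x).2 = π x.2 := by
  obtain ⟨a, i⟩ := x; exact hg a i

lemma IsLift.mul {g h : Perm (α × ℕ)} {π ρ : Perm ℕ} (hg : IsLift g π) (hh : IsLift h ρ) :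
    IsLift (g * h) (π * ρ) := by
  intro a i
  have : ((g * h) (a, i)).2 = (g (h (a, i))).2 := rfl
  rw [this, hg.snd, hh.snd]
  rfl

lemma IsLift.inv {g : Perm (α × ℕ)} {π : Perm ℕ} (hg : IsLift g π) : IsLift g⁻¹ π⁻¹ := by
  intro a i
  apply π.injective
  have h1 : (g (g⁻¹ (a, i))).2 = π ((g⁻¹ (a, i)).2) := hg.snd _
  rw [← Equiv.Perm.mul_apply, mul_inv_cancel, Equiv.Perm.one_apply] at h1
  rw [← h1]
  simp

lemma IsLift.one : IsLift (1 : Perm (α × ℕ)) (1 : Perm ℕ) := fun _ _ => rfl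

lemma PureOn.apply {g : Perm (α × ℕ)} {J : Finset ℕ} (hg : PureOn g J) {x : α × ℕ}
    (hx : x.2 ∈ J) : g x = x := by
  obtain ⟨a, i⟩ := x; exact hg _ hx a

lemma PureOn.inv {g : Perm (α × ℕ)} {J : Finset ℕ} (hg : PureOn g J) : PureOn g⁻¹ J := by
  intro j hj a
  have := hg j hj a
  exact g.injective (by rw [← Equiv.Perm.mul_apply, mul_inv_cancel, Equiv.Perm.one_apply, this])

lemma PureOn.mul {g h : Perm (α × ℕ)} {J : Finset ℕ} (hg : PureOn g J) (hh : PureOn h J) :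
    PureOn (g * h) J := by
  intro j hj a
  have : (g * h) (a, j) = g (h (a, j)) := rfl
  rw [this, hh j hj a, hg j hj a]

lemma PureOn.mono {g : Perm (α × ℕ)} {J J' : Finset ℕ} (hg : PureOn g J) (h : J' ⊆ J) :
    PureOn g J' := fun j hj a => hg j (h hj) a

lemma PureOn.one (J : Finset ℕ) : PureOn (1 : Perm (α × ℕ)) J := fun _ _ _ => rfl

lemma exists_blockEquiv (g : Perm (α × ℕ)) (p q : ℕ) (hpq : ∀ a, (g (a, p)).2 = q) :
    ∃ f : α ≃ α, ∀ a, g (a, p) = (f a, q) := by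
  have hinj : Function.Injective (fun a : α => (g (a, p)).1) := by
    intro a a' h
    have h2 : g (a, p) = g (a', p) := Prod.ext h (by rw [hpq, hpq])
    have := g.injective h2
    exact (Prod.ext_iff.1 this).1
  refine ⟨Equiv.ofBijective _ (Finite.injective_iff_bijective.1 hinj), fun a => ?_⟩
  exact Prod.ext rfl (hpq a)


variable {α : Type*} [Finite α] [Nonempty α]

/-- Ultrafilter limit of a sequence of elements of `G` with converging block permutations. -/
lemma limit_lemma (G : Subgroup (Perm (α × ℕ)))
    (hclosed : ∀ σ : Equiv.Perm (α × ℕ),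
      (∀ s : Finset (α × ℕ), ∃ g ∈ G, ∀ x ∈ s, g x = σ x) → σ ∈ G)
    (g : ℕ → Perm (α × ℕ)) (hG : ∀ n, (g n) ∈ G)
    (πs : ℕ → Perm ℕ) (hl : ∀ n, IsLift (g n) (πs n)) (π : Perm ℕ)
    (hconv : ∀ i, {n | πs n i = π i} ∈ (Filter.cofinite : Filter ℕ)) :
    ∃ h ∈ G, IsLift h π ∧ ∀ s : Finset (α × ℕ), ∃ n, ∀ x ∈ s, g n x = h x := by
  classical
  set h₀ : α × ℕ → α × ℕ := fun x => (uflim UF (fun n => (g n x).1), π x.2) with hh₀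
  have hS : ∀ x : α × ℕ, {n | g n x = h₀ x} ∈ UF := by
    intro x
    have h1 : {n | (g n x).1 = (h₀ x).1} ∈ UF := uflim_spec UF (fun n => (g n x).1)
    have h2 : {n | (g n x).2 = (h₀ x).2} ∈ UF := by
      have : {n | πs n x.2 = π x.2} ⊆ {n | (g n x).2 = (h₀ x).2} := by
        intro n hn
        simp only [Set.mem_setOf_eq] at hn ⊢
        rw [(hl n).snd x, hn]
      exact Filter.mem_of_superset (cofinite_mem_UF (hconv x.2)) this
    have h3 := (UF : Filter ℕ).inter_sets h1 h2
    refine Filter.mem_of_superset h3 ?_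
    rintro n ⟨hn1, hn2⟩
    exact Prod.ext hn1 hn2
  -- injectivity
  have hinj : Function.Injective h₀ := by
    intro x y hxy
    have := (UF : Filter ℕ).inter_sets (hS x) (hS y)
    obtain ⟨n, hnx, hny⟩ := Ultrafilter.nonempty_of_mem this
    exact (g n).injective (by rw [hnx, hny, hxy])
  -- surjectivity
  have hsurj0 : Function.Surjective h₀ := by
    rintro ⟨b, j⟩
    set i := π.symm j with hi
    have hminj : Function.Injective (fun a : α => (h₀ (a, i)).1) := by
      intro a a' haa
      have : h₀ (a, i) = h₀ (a', i) := Prod.ext haa rfl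
      have := hinj this
      exact (Prod.ext_iff.1 this).1
    obtain ⟨a, ha⟩ := Finite.injective_iff_surjective.1 hminj b
    refine ⟨(a, i), ?_⟩
    have : h₀ (a, i) = ((h₀ (a, i)).1, π i) := rfl
    simp only at ha
    rw [this]
    exact Prod.ext ha (by simp [hi])
  set hE : Perm (α × ℕ) := Equiv.ofBijective h₀ ⟨hinj, hsurj0⟩ with hhE
  have happ : ∀ x, hE x = h₀ x := fun x => rfl
  have happrox : ∀ s : Finset (α × ℕ), ∃ n, ∀ x ∈ s, g n x = hE x := by
    intro s
    have : (⋂ x ∈ s, {n | g n x = h₀ x}) ∈ UF := by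
      refine (Filter.biInter_finset_mem s).2 fun x _ => hS x
    obtain ⟨n, hn⟩ := Ultrafilter.nonempty_of_mem this
    refine ⟨n, fun x hx => ?_⟩
    rw [happ]
    exact Set.mem_iInter₂.1 hn x hx
  refine ⟨hE, ?_, ?_, happrox⟩
  · apply hclosed
    intro s
    obtain ⟨n, hn⟩ := happrox s
    exact ⟨g n, hG n, hn⟩
  · intro a i
    rfl


def Agrees (q : Finset (ℕ × ℕ)) (π : Perm ℕ) : Prop := ∀ xy ∈ q, π xy.1 = xy.2

lemma Agrees.mono {q q' : Finset (ℕ × ℕ)} {π : Perm ℕ} (h : Agrees q' π) (hs : q ⊆ q') :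
    Agrees q π := fun xy hxy => h xy (hs hxy)

lemma baire (𝒜 : ℕ → Set (Perm ℕ))
    (hcl : ∀ n, ∀ π ∉ 𝒜 n, ∃ q, Agrees q π ∧ ∀ π', Agrees q π' → π' ∉ 𝒜 n)
    (hcov : ∀ π, ∃ n, π ∈ 𝒜 n) :
    ∃ (n : ℕ) (q : Finset (ℕ × ℕ)) (π₀ : Perm ℕ), Agrees q π₀ ∧ ∀ π, Agrees q π → π ∈ 𝒜 n := by
  classical
  by_contra hcon
  push_neg at hcon
  -- hcon : ∀ n q π₀, Agrees q π₀ → ∃ π, Agrees q π ∧ π ∉ 𝒜 n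
  have step : ∀ n (s : Finset (ℕ × ℕ)) (w : Perm ℕ), Agrees s w →
      ∃ (t : Finset (ℕ × ℕ)) (w' : Perm ℕ), Agrees t w' ∧ s ⊆ t ∧
        (n, w' n) ∈ t ∧ (w'.symm n, n) ∈ t ∧ ∀ π, Agrees t π → π ∉ 𝒜 n := by
    intro n s w hs
    obtain ⟨π', h1, h2⟩ := hcon n s w hs
    obtain ⟨q, hq1, hq2⟩ := hcl n π' h2
    refine ⟨(s ∪ q) ∪ {(n, π' n), (π'.symm n, n)}, π', ?_, ?_, ?_, ?_, ?_⟩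
    · intro xy hxy
      rcases Finset.mem_union.1 hxy with h | h
      · rcases Finset.mem_union.1 h with h' | h'
        · exact h1 xy h'
        · exact hq1 xy h'
      · rcases Finset.mem_insert.1 h with h' | h'
        · rw [h']
        · rw [Finset.mem_singleton.1 h']
          simp
    · intro xy hxy
      exact Finset.mem_union.2 (Or.inl (Finset.mem_union.2 (Or.inl hxy)))
    · exact Finset.mem_union.2 (Or.inr (Finset.mem_insert.2 (Or.inl rfl)))
    · exact Finset.mem_union.2 (Or.inr (Finset.mem_insert.2 (Or.inr (Finset.mem_singleton.2 rfl))))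
    · intro π hπ
      exact hq2 π (hπ.mono (fun xy hxy =>
        Finset.mem_union.2 (Or.inl (Finset.mem_union.2 (Or.inr hxy)))))
  choose T W hagr hsub hm1 hm2 hesc using step
  set Q : ℕ → {sw : Finset (ℕ × ℕ) × Perm ℕ // Agrees sw.1 sw.2} :=
    fun n => Nat.rec ⟨(∅, 1), fun xy h => absurd h (Finset.notMem_empty xy)⟩
      (fun n p => ⟨(T n p.1.1 p.1.2 p.2, W n p.1.1 p.1.2 p.2), hagr n p.1.1 p.1.2 p.2⟩) n
      with hQdef
  set Qs : ℕ → Finset (ℕ × ℕ) := fun n => (Q n).1.1 with hQs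
  set Ws : ℕ → Perm ℕ := fun n => (Q n).1.2 with hWs
  have hQsucc : ∀ n, Qs (n + 1) = T n (Qs n) (Ws n) (Q n).2 ∧
      Ws (n + 1) = W n (Qs n) (Ws n) (Q n).2 := fun n => ⟨rfl, rfl⟩
  have hAg : ∀ n, Agrees (Qs n) (Ws n) := fun n => (Q n).2
  have hmono : ∀ m n, m ≤ n → Qs m ⊆ Qs n := by
    intro m n hmn
    induction n with
    | zero => rw [Nat.le_zero.1 hmn]
    | succ k ih =>
      rcases Nat.lt_or_ge m (k + 1) with h | h
      · have := ih (Nat.lt_succ_iff.1 h)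
        refine this.trans ?_
        rw [(hQsucc k).1]
        exact hsub k (Qs k) (Ws k) (Q k).2
      · rw [Nat.le_antisymm hmn h]
  have hpair : ∀ x, (x, Ws (x + 1) x) ∈ Qs (x + 1) := by
    intro x
    have := hm1 x (Qs x) (Ws x) (Q x).2
    rw [(hQsucc x).1, (hQsucc x).2]
    exact this
  have hpair2 : ∀ y, ((Ws (y + 1)).symm y, y) ∈ Qs (y + 1) := by
    intro y
    have := hm2 y (Qs y) (Ws y) (Q y).2
    rw [(hQsucc y).1, (hQsucc y).2]
    exact this
  have hescape : ∀ n π, Agrees (Qs (n + 1)) π → π ∉ 𝒜 n := by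
    intro n π h
    have := hesc n (Qs n) (Ws n) (Q n).2 π
    rw [(hQsucc n).1] at h
    exact this h
  -- functionality across stages
  have hfun : ∀ (x y m y' m'), (x, y) ∈ Qs m → (x, y') ∈ Qs m' → y = y' := by
    intro x y m y' m' h1 h2
    have h1' : (x, y) ∈ Qs (max m m') := hmono m _ (le_max_left _ _) h1
    have h2' : (x, y') ∈ Qs (max m m') := hmono m' _ (le_max_right _ _) h2
    have e1 := hAg (max m m') (x, y) h1'
    have e2 := hAg (max m m') (x, y') h2'
    simp only at e1 e2
    rw [← e1, ← e2]
  set F : ℕ → ℕ := fun x => Ws (x + 1) x with hF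
  have hFmem : ∀ x, (x, F x) ∈ Qs (x + 1) := hpair
  have hFinj : Function.Injective F := by
    intro x x' hxx
    by_contra hne
    set M := max (x + 1) (x' + 1) with hM
    have h1 : (x, F x) ∈ Qs M := hmono _ _ (le_max_left _ _) (hFmem x)
    have h2 : (x', F x') ∈ Qs M := hmono _ _ (le_max_right _ _) (hFmem x')
    have e1 := hAg M (x, F x) h1
    have e2 := hAg M (x', F x') h2
    simp only at e1 e2
    exact hne ((Ws M).injective (by rw [e1, e2, hxx]))
  have hFsurj : Function.Surjective F := by
    intro y
    refine ⟨(Ws (y + 1)).symm y, ?_⟩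
    exact hfun ((Ws (y + 1)).symm y) (F ((Ws (y + 1)).symm y)) (((Ws (y + 1)).symm y) + 1) y (y + 1) (hFmem _) (hpair2 y)
  set πF : Perm ℕ := Equiv.ofBijective F ⟨hFinj, hFsurj⟩ with hπF
  have hπFagr : ∀ m, Agrees (Qs m) πF := by
    intro m xy hxy
    obtain ⟨x, y⟩ := xy
    have : y = F x := hfun x y m (F x) (x + 1) hxy (hFmem x)
    rw [this]
    rfl
  obtain ⟨n, hn⟩ := hcov πF
  exact hescape n πF (hπFagr (n + 1)) hn



variable {α : Type*} [Finite α] [Nonempty α]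

/-- Baire/Pettis: lifts of permutations fixing a large finite set pointwise can be
chosen to fix `α × J` pointwise. -/
lemma pure_stab (G : Subgroup (Perm (α × ℕ)))
    (hsurj : ∀ τ : Equiv.Perm ℕ, ∃ g ∈ G, ∀ (a : α) (i : ℕ), (g (a, i)).2 = τ i)
    (hclosed : ∀ σ : Equiv.Perm (α × ℕ),
      (∀ s : Finset (α × ℕ), ∃ g ∈ G, ∀ x ∈ s, g x = σ x) → σ ∈ G)
    (J : Finset ℕ) :
    ∃ M : Finset ℕ, J ⊆ M ∧ ∀ ρ : Perm ℕ, (∀ m ∈ M, ρ m = m) →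
      ∃ g ∈ G, IsLift g ρ ∧ PureOn g J := by
  classical
  obtain ⟨Fe, hFe⟩ := exists_surjective_nat (α → {x // x ∈ J} → α × ℕ)
  set 𝒜 : ℕ → Set (Perm ℕ) := fun n =>
    {π | ∃ g ∈ G, IsLift g π ∧ ∀ (a : α) (j : {x // x ∈ J}), g (a, (j : ℕ)) = Fe n a j}
    with h𝒜
  have hcov : ∀ π, ∃ n, π ∈ 𝒜 n := by
    intro π
    obtain ⟨g, hgG, hgl⟩ := hsurj π
    obtain ⟨n, hn⟩ := hFe (fun a j => g (a, (j : ℕ)))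
    exact ⟨n, g, hgG, hgl, fun a j => by rw [hn]⟩
  have hcl : ∀ n, ∀ π ∉ 𝒜 n, ∃ q, Agrees q π ∧ ∀ π', Agrees q π' → π' ∉ 𝒜 n := by
    intro n π hπ
    by_contra hno
    push_neg at hno
    -- hno : ∀ q, Agrees q π → ∃ π', Agrees q π' ∧ π' ∈ 𝒜 n
    have hex : ∀ m : ℕ, ∃ π' : Perm ℕ, (∀ i < m, π' i = π i) ∧ π' ∈ 𝒜 n := by
      intro m
      have hq : Agrees ((Finset.range m).image (fun i => (i, π i))) π := by
        intro xy hxy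
        obtain ⟨i, _, hi⟩ := Finset.mem_image.1 hxy
        rw [← hi]
      obtain ⟨π', h1, h2⟩ := hno _ hq
      refine ⟨π', fun i him => ?_, h2⟩
      exact h1 (i, π i) (Finset.mem_image.2 ⟨i, Finset.mem_range.2 him, rfl⟩)
    choose πs h1 h2 using hex
    choose gs hgsG hgsl hgsF using h2
    have hconv : ∀ i, {m | πs m i = π i} ∈ (Filter.cofinite : Filter ℕ) := by
      intro i
      rw [Filter.mem_cofinite]
      apply Set.Finite.subset (Set.finite_le_nat i)
      intro m hm
      simp only [Set.mem_compl_iff, Set.mem_setOf_eq] at hm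
      by_contra hmi
      exact hm (h1 m i (Nat.lt_of_not_le hmi))
    obtain ⟨h, hhG, hhl, happ⟩ := limit_lemma G hclosed gs hgsG πs hgsl π hconv
    apply hπ
    refine ⟨h, hhG, hhl, fun a j => ?_⟩
    obtain ⟨m, hm⟩ := happ {(a, (j : ℕ))}
    rw [← hm _ (Finset.mem_singleton_self _), hgsF]
  obtain ⟨n₀, q₀, π₀, hagr₀, hcyl⟩ := baire 𝒜 hcl hcov
  refine ⟨J ∪ q₀.image Prod.fst ∪ q₀.image Prod.snd, by intro j hj; simp [hj], ?_⟩
  intro ρ hρ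
  have hπ₀ : π₀ ∈ 𝒜 n₀ := hcyl π₀ hagr₀
  have hπ1 : (π₀ * ρ) ∈ 𝒜 n₀ := by
    apply hcyl
    intro xy hxy
    have hx : ρ xy.1 = xy.1 := by
      apply hρ
      simp only [Finset.mem_union]
      exact Or.inl (Or.inr (Finset.mem_image.2 ⟨xy, hxy, rfl⟩))
    have : (π₀ * ρ) xy.1 = π₀ (ρ xy.1) := rfl
    rw [this, hx]
    exact hagr₀ xy hxy
  obtain ⟨g₁, hg₁G, hg₁l, hg₁F⟩ := hπ₀
  obtain ⟨g₂, hg₂G, hg₂l, hg₂F⟩ := hπ1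
  refine ⟨g₁⁻¹ * g₂, mul_mem (inv_mem hg₁G) hg₂G, ?_, ?_⟩
  · have : IsLift (g₁⁻¹ * g₂) (π₀⁻¹ * (π₀ * ρ)) := (hg₁l.inv).mul hg₂l
    rwa [inv_mul_cancel_left] at this
  · intro j hj a
    have : (g₁⁻¹ * g₂) (a, j) = g₁⁻¹ (g₂ (a, j)) := rfl
    rw [this, hg₂F a ⟨j, hj⟩, ← hg₁F a ⟨j, hj⟩]
    simp

/-- The set of achievable block germs `p → q` for elements fixing `α × J` pointwise. -/
def TSetE (G : Subgroup (Perm (α × ℕ))) (J : Finset ℕ) (p q : ℕ) : Set (α ≃ α) :=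
  {f | ∃ g ∈ G, PureOn g J ∧ ∀ a, g (a, p) = (f a, q)}

lemma tset_nonempty (G : Subgroup (Perm (α × ℕ)))
    (hsurj : ∀ τ : Equiv.Perm ℕ, ∃ g ∈ G, ∀ (a : α) (i : ℕ), (g (a, i)).2 = τ i)
    (hclosed : ∀ σ : Equiv.Perm (α × ℕ),
      (∀ s : Finset (α × ℕ), ∃ g ∈ G, ∀ x ∈ s, g x = σ x) → σ ∈ G)
    (J : Finset ℕ) (p q : ℕ) (hp : p ∉ J) (hq : q ∉ J) (hpq : p ≠ q) :
    ∃ f : α ≃ α, f ∈ TSetE G J p q := by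
  classical
  obtain ⟨M, hJM, hM⟩ := pure_stab G hsurj hclosed J
  set K : Finset ℕ := (M ∪ J) ∪ {p, q} with hK
  set p₀ : ℕ := K.sup id + 1 with hp₀
  set q₀ : ℕ := K.sup id + 2 with hq₀
  have hfresh : ∀ x ∈ K, x < p₀ := by
    intro x hx
    have : x ≤ K.sup id := Finset.le_sup (f := id) hx
    omega
  have hpK : p ∈ K := by simp [hK]
  have hqK : q ∈ K := by simp [hK]
  have hp₀q₀ : p₀ ≠ q₀ := by omega
  have hpp₀ : p ≠ p₀ := Nat.ne_of_lt (hfresh p hpK)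
  have hpq₀ : p ≠ q₀ := by have := hfresh p hpK; omega
  have hqp₀ : q ≠ p₀ := Nat.ne_of_lt (hfresh q hqK)
  have hqq₀ : q ≠ q₀ := by have := hfresh q hqK; omega
  -- the far swap, lifted purely on J
  have hswapM : ∀ m ∈ M, (Equiv.swap p₀ q₀) m = m := by
    intro m hm
    have hmK : m ∈ K := by simp [hK, hm]
    have h1 := hfresh m hmK
    exact Equiv.swap_apply_of_ne_of_ne (by omega) (by omega)
  obtain ⟨w, hwG, hwl, hwp⟩ := hM (Equiv.swap p₀ q₀) hswapM
  -- transporting permutation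
  set τ : Perm ℕ := Equiv.swap p₀ p * Equiv.swap q₀ q with hτ
  have hτp₀ : τ p₀ = p := by
    have h1 : (Equiv.swap q₀ q) p₀ = p₀ :=
      Equiv.swap_apply_of_ne_of_ne hp₀q₀ (Ne.symm hqp₀)
    have : τ p₀ = (Equiv.swap p₀ p) ((Equiv.swap q₀ q) p₀) := rfl
    rw [this, h1, Equiv.swap_apply_left]
  have hτq₀ : τ q₀ = q := by
    have : τ q₀ = (Equiv.swap p₀ p) ((Equiv.swap q₀ q) q₀) := rfl
    rw [this, Equiv.swap_apply_left]
    exact Equiv.swap_apply_of_ne_of_ne hqp₀ (Ne.symm hpq)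
  have hτJ : ∀ j ∈ J, τ j = j := by
    intro j hj
    have hjK : j ∈ K := by simp [hK, hj]
    have hjlt := hfresh j hjK
    have h1 : (Equiv.swap q₀ q) j = j :=
      Equiv.swap_apply_of_ne_of_ne (by omega) (fun h => hq (h ▸ hj))
    have : τ j = (Equiv.swap p₀ p) ((Equiv.swap q₀ q) j) := rfl
    rw [this, h1]
    exact Equiv.swap_apply_of_ne_of_ne (by omega) (fun h => hp (h ▸ hj))
  obtain ⟨t, htG, htl⟩ := hsurj τ
  have htl' : IsLift t τ := htl
  set u : Perm (α × ℕ) := t * w * t⁻¹ with hu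
  have huG : u ∈ G := mul_mem (mul_mem htG hwG) (inv_mem htG)
  have hul : IsLift u (τ * Equiv.swap p₀ q₀ * τ⁻¹) := (htl'.mul hwl).mul htl'.inv
  have hblock : (τ * Equiv.swap p₀ q₀ * τ⁻¹) p = q := by
    have h1 : τ⁻¹ p = p₀ := by
      rw [← hτp₀]; simp
    have : (τ * Equiv.swap p₀ q₀ * τ⁻¹) p = τ ((Equiv.swap p₀ q₀) (τ⁻¹ p)) := rfl
    rw [this, h1, Equiv.swap_apply_left, hτq₀]
  have hupure : PureOn u J := by
    intro j hj a
    have h1 : (t⁻¹ (a, j)).2 = τ⁻¹ j := htl'.inv.snd (a, j)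
    have h2 : τ⁻¹ j = j := by
      rw [Equiv.Perm.inv_eq_iff_eq]; exact (hτJ j hj).symm
    have h3 : t⁻¹ (a, j) = ((t⁻¹ (a, j)).1, j) := Prod.ext rfl (by rw [h1, h2])
    have h4 : w (t⁻¹ (a, j)) = t⁻¹ (a, j) := by
      rw [h3]; exact hwp j hj _
    have : u (a, j) = t (w (t⁻¹ (a, j))) := rfl
    rw [this, h4]
    simp
  have hu2 : ∀ a, (u (a, p)).2 = q := by
    intro a
    rw [hul.snd (a, p), hblock]
  obtain ⟨f, hf⟩ := exists_blockEquiv u p q hu2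
  exact ⟨f, u, huG, hupure, hf⟩

/-- The coherent family of block identifications. -/
lemma exists_e (G : Subgroup (Perm (α × ℕ)))
    (hsurj : ∀ τ : Equiv.Perm ℕ, ∃ g ∈ G, ∀ (a : α) (i : ℕ), (g (a, i)).2 = τ i)
    (hclosed : ∀ σ : Equiv.Perm (α × ℕ),
      (∀ s : Finset (α × ℕ), ∃ g ∈ G, ∀ x ∈ s, g x = σ x) → σ ∈ G) :
    ∃ e : ℕ → α ≃ α, ∀ (p q : ℕ) (J : Finset ℕ), p ≠ q → p ∉ J → q ∉ J →
      ((e p).symm.trans (e q)) ∈ TSetE G J p q := by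
  classical
  have hch : ∀ n p, p < n → ∃ f : α ≃ α, f ∈ TSetE G ((Finset.range n).erase p) n p := by
    intro n p hp
    apply tset_nonempty G hsurj hclosed
    · intro h
      exact absurd (Finset.mem_of_mem_erase h) (by simp)
    · exact Finset.notMem_erase p _
    · omega
  set es : ℕ → ℕ → α ≃ α := fun n p => if h : p < n then (hch n p h).choose else 1 with hesdef
  have hes : ∀ n p (h : p < n), es n p ∈ TSetE G ((Finset.range n).erase p) n p := by
    intro n p h
    simp only [hesdef, dif_pos h]
    exact (hch n p h).choose_spec
  have hprop : ∀ n p q (J : Finset ℕ), p ≠ q → p ∉ J → q ∉ J → p < n → q < n →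
      (∀ j ∈ J, j < n) → ((es n p).symm.trans (es n q)) ∈ TSetE G J p q := by
    intro n p q J hpq hpJ hqJ hpn hqn hJn
    obtain ⟨up, hupG, hupP, hupF⟩ := hes n p hpn
    obtain ⟨uq, huqG, huqP, huqF⟩ := hes n q hqn
    refine ⟨uq * up⁻¹, mul_mem huqG (inv_mem hupG), ?_, ?_⟩
    · intro j hj a
      have hjp : j ∈ (Finset.range n).erase p :=
        Finset.mem_erase.2 ⟨fun h => hpJ (h ▸ hj), Finset.mem_range.2 (hJn j hj)⟩
      have hjq : j ∈ (Finset.range n).erase q :=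
        Finset.mem_erase.2 ⟨fun h => hqJ (h ▸ hj), Finset.mem_range.2 (hJn j hj)⟩
      have : (uq * up⁻¹) (a, j) = uq (up⁻¹ (a, j)) := rfl
      rw [this, hupP.inv j hjp a, huqP j hjq a]
    · intro a
      have h1 : up⁻¹ (a, p) = ((es n p).symm a, n) := by
        apply up.injective
        rw [← Equiv.Perm.mul_apply, mul_inv_cancel, Equiv.Perm.one_apply, hupF]
        simp
      have h2 : (uq * up⁻¹) (a, p) = uq (up⁻¹ (a, p)) := rfl
      rw [h2, h1, huqF]
      simp
  set e : ℕ → α ≃ α := fun p => uflim UF (fun n => es n p) with hedef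
  refine ⟨e, ?_⟩
  intro p q J hpq hpJ hqJ
  set N : ℕ := max (max p q + 1) (J.sup id + 1) with hN
  have hS : ({n | es n p = e p} ∩ {n | es n q = e q} ∩ {n | N ≤ n}) ∈ UF := by
    exact (UF : Filter ℕ).inter_sets
      ((UF : Filter ℕ).inter_sets (uflim_spec UF _) (uflim_spec UF _)) (tail_mem_UF N)
  obtain ⟨n, ⟨hn1, hn2⟩, hn3⟩ := Ultrafilter.nonempty_of_mem hS
  simp only [Set.mem_setOf_eq] at hn1 hn2 hn3
  rw [← hn1, ← hn2]
  refine hprop n p q J hpq hpJ hqJ (by omega) (by omega) ?_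
  intro j hj
  have : j ≤ J.sup id := Finset.le_sup (f := id) hj
  omega

/-- Transfer lemma: move the contents of the blocks listed in `L` to the blocks `tgt`,
with prescribed coboundary germs, while fixing `α × prot` pointwise. -/
lemma transfer (G : Subgroup (Perm (α × ℕ))) (e : ℕ → α ≃ α)
    (he : ∀ (p q : ℕ) (J : Finset ℕ), p ≠ q → p ∉ J → q ∉ J →
      ((e p).symm.trans (e q)) ∈ TSetE G J p q) :
    ∀ (L : List ℕ) (tgt : ℕ → ℕ) (prot : Finset ℕ),
      L.Nodup → (∀ i ∈ L, i ∉ prot) → (∀ i ∈ L, tgt i ∉ prot) →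
      (∀ i ∈ L, ∀ j ∈ L, tgt i = tgt j → i = j) → (∀ i ∈ L, ∀ j ∈ L, tgt i ≠ j) →
      (∀ i ∈ L, tgt i ≠ i) →
      ∃ g ∈ G, PureOn g prot ∧
        ∀ i ∈ L, ∀ a, g (a, i) = (((e i).symm.trans (e (tgt i))) a, tgt i) := by
  classical
  intro L
  induction L with
  | nil =>
    intro tgt prot _ _ _ _ _ _
    exact ⟨1, one_mem G, PureOn.one prot, by simp⟩
  | cons i L ih =>
    intro tgt prot hnd hs ht hinj hdisj hne
    have hiL : i ∉ L := (List.nodup_cons.1 hnd).1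
    have hndL : L.Nodup := (List.nodup_cons.1 hnd).2
    set Ju : Finset ℕ := (prot ∪ L.toFinset) ∪ (L.map tgt).toFinset with hJu
    have hiJu : i ∉ Ju := by
      simp only [hJu, Finset.mem_union, List.mem_toFinset, List.mem_map]
      push_neg
      refine ⟨⟨hs i List.mem_cons_self, hiL⟩, fun j hj => ?_⟩
      exact hdisj j (List.mem_cons_of_mem i hj) i List.mem_cons_self
    have htiJu : tgt i ∉ Ju := by
      simp only [hJu, Finset.mem_union, List.mem_toFinset, List.mem_map]
      push_neg
      refine ⟨⟨ht i List.mem_cons_self, fun hjt => ?_⟩, fun j hj => ?_⟩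
      · exact hdisj i List.mem_cons_self (tgt i) (List.mem_cons_of_mem i hjt) rfl
      · intro hEq
        have := hinj j (List.mem_cons_of_mem i hj) i List.mem_cons_self hEq
        exact hiL (this ▸ hj)
    obtain ⟨u, huG, huP, huF⟩ :=
      he i (tgt i) Ju (Ne.symm (hne i List.mem_cons_self)) hiJu htiJu
    obtain ⟨g', hg'G, hg'P, hg'F⟩ := ih tgt (insert (tgt i) prot) hndL
      (fun j hj => by
        simp only [Finset.mem_insert]
        push_neg
        exact ⟨Ne.symm (hdisj i List.mem_cons_self j (List.mem_cons_of_mem i hj)),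
          hs j (List.mem_cons_of_mem i hj)⟩)
      (fun j hj => by
        simp only [Finset.mem_insert]
        push_neg
        refine ⟨fun hEq => ?_, ht j (List.mem_cons_of_mem i hj)⟩
        have := hinj j (List.mem_cons_of_mem i hj) i List.mem_cons_self hEq
        exact hiL (this ▸ hj))
      (fun j hj k hk h =>
        hinj j (List.mem_cons_of_mem i hj) k (List.mem_cons_of_mem i hk) h)
      (fun j hj k hk =>
        hdisj j (List.mem_cons_of_mem i hj) k (List.mem_cons_of_mem i hk))
      (fun j hj => hne j (List.mem_cons_of_mem i hj))
    refine ⟨g' * u, mul_mem hg'G huG, ?_, ?_⟩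
    · intro j hj a
      have h1 : (g' * u) (a, j) = g' (u (a, j)) := rfl
      have h2 : u (a, j) = (a, j) := huP j (by simp [hJu, hj]) a
      rw [h1, h2]
      exact hg'P j (Finset.mem_insert_of_mem hj) a
    · intro j hj a
      rcases List.mem_cons.1 hj with h | h
      · subst h
        have h1 : (g' * u) (a, j) = g' (u (a, j)) := rfl
        rw [h1, huF a]
        exact hg'P (tgt j) (Finset.mem_insert_self _ _) _
      · have h1 : (g' * u) (a, j) = g' (u (a, j)) := rfl
        have h2 : u (a, j) = (a, j) := huP j (by simp [hJu, h]) a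
        rw [h1, h2]
        exact hg'F j h a

/-- Window realization of the `e`-twisted pure permutation. -/
lemma main_claim (G : Subgroup (Perm (α × ℕ))) (e : ℕ → α ≃ α)
    (he : ∀ (p q : ℕ) (J : Finset ℕ), p ≠ q → p ∉ J → q ∉ J →
      ((e p).symm.trans (e q)) ∈ TSetE G J p q)
    (π : Perm ℕ) (I : Finset ℕ) :
    ∃ g ∈ G, ∀ i ∈ I, ∀ a, g (a, i) = (e (π i) ((e i).symm a), π i) := by
  classical
  set P : Finset ℕ := I.filter (fun i => π i = i) with hP
  set L : List ℕ := (I.filter (fun i => π i ≠ i)).toList with hL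
  set N₀ : ℕ := (I ∪ I.image π).sup id + 1 with hN₀
  have hIlt : ∀ i ∈ I, i < N₀ := by
    intro i hi
    have h1 : i ≤ (I ∪ I.image π).sup id :=
      Finset.le_sup (f := id) (Finset.mem_union.2 (Or.inl hi))
    omega
  have hπlt : ∀ i ∈ I, π i < N₀ := by
    intro i hi
    have h1 : π i ≤ (I ∪ I.image π).sup id :=
      Finset.le_sup (f := id) (Finset.mem_union.2 (Or.inr (Finset.mem_image.2 ⟨i, hi, rfl⟩)))
    omega
  have hLmem : ∀ i ∈ L, i ∈ I ∧ π i ≠ i := by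
    intro i hi
    rw [hL, Finset.mem_toList, Finset.mem_filter] at hi
    exact hi
  have hPmem : ∀ i ∈ P, i ∈ I ∧ π i = i := by
    intro i hi
    rw [hP, Finset.mem_filter] at hi
    exact hi
  have hPlt : ∀ i ∈ P, i < N₀ := fun i hi => hIlt i (hPmem i hi).1
  -- phase 1 : park
  obtain ⟨g₁, hg₁G, hg₁P, hg₁F⟩ := transfer G e he L (fun i => N₀ + i) P
    (by rw [hL]; exact Finset.nodup_toList _)
    (fun i hi hiP => (hLmem i hi).2 (hPmem i hiP).2)
    (fun i hi hiP => by
      have h1 : N₀ + i < N₀ := hPlt _ hiP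
      omega)
    (fun i _ j _ h => by
      have h' : N₀ + i = N₀ + j := h
      omega)
    (fun i _ j hj => by
      have h1 := hIlt j (hLmem j hj).1
      intro h
      have h' : N₀ + i = j := h
      omega)
    (fun i _ => by
      intro h
      have h' : N₀ + i = i := h
      omega)
  -- phase 2 : deliver
  obtain ⟨g₂, hg₂G, hg₂P, hg₂F⟩ := transfer G e he (L.map (fun i => N₀ + i))
    (fun b => π (b - N₀)) P
    ((by rw [hL]; exact Finset.nodup_toList _ : L.Nodup).map
      (fun x y h => by
        have h' : N₀ + x = N₀ + y := h
        omega))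
    (fun b hb hbP => by
      obtain ⟨i, _, rfl⟩ := List.mem_map.1 hb
      have h1 : N₀ + i < N₀ := hPlt _ hbP
      omega)
    (fun b hb hbP => by
      obtain ⟨i, hiL, rfl⟩ := List.mem_map.1 hb
      have hbP' : π (N₀ + i - N₀) ∈ P := hbP
      rw [Nat.add_sub_cancel_left] at hbP'
      have h1 := hPmem _ hbP'
      have h3 : π i = i := π.injective h1.2
      exact (hLmem i hiL).2 h3)
    (fun b hb c hc h => by
      obtain ⟨i, hiL, rfl⟩ := List.mem_map.1 hb
      obtain ⟨j, hjL, rfl⟩ := List.mem_map.1 hc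
      have h' : π (N₀ + i - N₀) = π (N₀ + j - N₀) := h
      rw [Nat.add_sub_cancel_left, Nat.add_sub_cancel_left] at h'
      have := π.injective h'
      omega)
    (fun b hb c hc => by
      obtain ⟨i, hiL, rfl⟩ := List.mem_map.1 hb
      obtain ⟨j, hjL, rfl⟩ := List.mem_map.1 hc
      intro h
      have h' : π (N₀ + i - N₀) = N₀ + j := h
      rw [Nat.add_sub_cancel_left] at h'
      have := hπlt i (hLmem i hiL).1
      omega)
    (fun b hb => by
      obtain ⟨i, hiL, rfl⟩ := List.mem_map.1 hb
      intro h
      have h' : π (N₀ + i - N₀) = N₀ + i := h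
      rw [Nat.add_sub_cancel_left] at h'
      have := hπlt i (hLmem i hiL).1
      omega)
  refine ⟨g₂ * g₁, mul_mem hg₂G hg₁G, ?_⟩
  intro i hi a
  by_cases hπi : π i = i
  · have hiP : i ∈ P := by rw [hP]; exact Finset.mem_filter.2 ⟨hi, hπi⟩
    have h1 : (g₂ * g₁) (a, i) = g₂ (g₁ (a, i)) := rfl
    rw [h1, hg₁P i hiP a, hg₂P i hiP a, hπi]
    simp
  · have hiL : i ∈ L := by
      rw [hL, Finset.mem_toList]
      exact Finset.mem_filter.2 ⟨hi, hπi⟩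
    have h1 : (g₂ * g₁) (a, i) = g₂ (g₁ (a, i)) := rfl
    rw [h1, hg₁F i hiL a]
    have hmem : N₀ + i ∈ L.map (fun i => N₀ + i) := List.mem_map.2 ⟨i, hiL, rfl⟩
    have h2 := hg₂F _ hmem (((e i).symm.trans (e (N₀ + i))) a)
    rw [h2]
    have h3 : N₀ + i - N₀ = i := Nat.add_sub_cancel_left N₀ i
    rw [h3]
    simp

/-- The `e`-twisted pure permutation induced by `π`. -/
noncomputable def pureE (e : ℕ → α ≃ α) (π : Perm ℕ) : Perm (α × ℕ) where
  toFun x := (e (π x.2) ((e x.2).symm x.1), π x.2)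
  invFun y := (e (π.symm y.2) ((e y.2).symm y.1), π.symm y.2)
  left_inv := by
    rintro ⟨a, i⟩
    simp
  right_inv := by
    rintro ⟨b, j⟩
    simp

lemma pureE_apply (e : ℕ → α ≃ α) (π : Perm ℕ) (a : α) (i : ℕ) :
    pureE e π (a, i) = (e (π i) ((e i).symm a), π i) := rfl

end ClosedLadder

/-- Let `α` be a finite nonempty type and `G ≤ Perm (α × ℕ)` a closed,
block-preserving group inducing the full symmetric group on the set of blocks
`α × {i}`. Then, after re-enumerating the elements within each block (via a
family of bijections `e i : α ≃ α`), `G` contains all the permutations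
`(a, i) ↦ (a, π i)` for `π ∈ Sym(ℕ)`. -/
theorem closed_group_contains_ladder
    (α : Type*) [Finite α] [Nonempty α]
    (G : Subgroup (Equiv.Perm (α × ℕ)))
    (hbp : ∀ g ∈ G, ∃ σ : Equiv.Perm ℕ, ∀ (a : α) (i : ℕ), (g (a, i)).2 = σ i)
    (hsurj : ∀ τ : Equiv.Perm ℕ, ∃ g ∈ G, ∀ (a : α) (i : ℕ), (g (a, i)).2 = τ i)
    (hclosed : ∀ σ : Equiv.Perm (α × ℕ),
      (∀ s : Finset (α × ℕ), ∃ g ∈ G, ∀ x ∈ s, g x = σ x) → σ ∈ G) :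
    ∃ e : ℕ → (α ≃ α), ∀ π : Equiv.Perm ℕ,
      ∃ g ∈ G, ∀ (a : α) (i : ℕ), g (a, i) = (e (π i) ((e i).symm a), π i) := by
  classical
  obtain ⟨e, he⟩ := ClosedLadder.exists_e G hsurj hclosed
  refine ⟨e, fun π => ?_⟩
  have hmem : ClosedLadder.pureE e π ∈ G := by
    apply hclosed
    intro s
    obtain ⟨g, hgG, hg⟩ := ClosedLadder.main_claim G e he π (s.image Prod.snd)
    refine ⟨g, hgG, fun x hx => ?_⟩
    obtain ⟨a, i⟩ := x
    have hi : i ∈ s.image Prod.snd := Finset.mem_image.2 ⟨(a, i), hx, rfl⟩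
    rw [hg i hi a, ClosedLadder.pureE_apply]
  exact ⟨ClosedLadder.pureE e π, hmem, fun a i => rfl⟩
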